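/- Let w be a finite word over the alphabet {0,1,…,r−1} that is a rearrangement of the word w_0 = ((k−1) mod r, (k−2) mod r, …, 1, 0). Let w' = (w_1+1, …, w_k+1, 0) and w_0' = (w_0,1 + 1, …, w_0,k + 1, 0), with addition mod r. Then inv(w) − inv(w_0) ≡ inv(w') − inv(w_0') (mod 2), where inv denotes the number of inversion pairs. -/

import Mathlib

/-- Boundary sequence of a partition (list of parts, weakly decreasing,
zero parts allowed and give leading `false`s): walk along the SE boundary
from SW corner to NE corner, `true` = east step, `false` = north step. -/
def bseq : List ℕ → List Bool
  | [] => []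
  | a :: s => bseq s ++ List.replicate (a - s.headI) true ++ [false]

/-- A partition: weakly decreasing list of positive integers. -/
def IsPartition (l : List ℕ) : Prop := l.Pairwise (· ≥ ·) ∧ ∀ x ∈ l, 0 < x

/-- The set of cells of the Young diagram (English convention, 0-indexed):
cell `(i, j)` is present iff `j < l_i`. -/
def cellSet (l : List ℕ) : Set (ℕ × ℕ) := {p | p.2 < l.getD p.1 0}

/-- Two cells are adjacent if they share an edge. -/
def CellAdj (p q : ℕ × ℕ) : Prop :=
  (p.1 = q.1 ∧ (p.2 + 1 = q.2 ∨ q.2 + 1 = p.2)) ∨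
  (p.2 = q.2 ∧ (p.1 + 1 = q.1 ∨ q.1 + 1 = p.1))

/-- A set of cells is connected (via edge-adjacency within the set). -/
def ConnSet (S : Set (ℕ × ℕ)) : Prop :=
  ∀ p ∈ S, ∀ q ∈ S, Relation.ReflTransGen (fun a b => b ∈ S ∧ CellAdj a b) p q

/-- A ribbon (border strip) of length `m`: a connected set of `m` cells
containing no 2×2 square. -/
 def IsRibbonSet (S : Set (ℕ × ℕ)) (m : ℕ) : Prop :=
  S.ncard = m ∧ ConnSet S ∧
  ∀ i j : ℕ, ¬((i, j) ∈ S ∧ (i + 1, j) ∈ S ∧ (i, j + 1) ∈ S ∧ (i + 1, j + 1) ∈ S)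

/-- `l'` is obtained from `l` by peeling a ribbon of length `m`. -/
def PeelRibbon (m : ℕ) (l l' : List ℕ) : Prop :=
  IsPartition l' ∧ cellSet l' ⊂ cellSet l ∧ IsRibbonSet (cellSet l \ cellSet l') m

/-- `l` has an empty `r`-core: it can be reduced to the empty partition by
successively peeling ribbons of length `r`. -/
def EmptyCore (r : ℕ) (l : List ℕ) : Prop :=
  Relation.ReflTransGen (fun x y => PeelRibbon r x y) l []

/-- The row-color sequence `a^(k)(λ)`: `a_i = (ℓ_i + k - i) mod r` (1-indexed),
here 0-indexed as `(l_i + k - i - 1) % r`. -/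
def rcs (r k : ℕ) (l : List ℕ) : List ℕ :=
  (List.range k).map (fun i => (l.getD i 0 + k - i - 1) % r)

/-- Inversion number of a word over a linearly ordered alphabet. -/
def invOn {α : Type*} [LinearOrder α] (w : List α) : ℕ :=
  (w.tails.map (fun t => match t with
    | [] => 0
    | a :: s => (s.filter (fun b => decide (b < a))).length)).sum

/-- `m_i` for a 0/1 (false/true) sequence: the number of `true`s among the
first `i` entries minus the number of `false`s among the remaining entries. -/
def mval (δ : List Bool) (i : ℕ) : ℤ :=
  ((δ.take i).count true : ℤ) - ((δ.drop i).count false : ℤ)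

/-- The anchor of a 0/1 sequence is at position `i` (between indices `i` and
`i+1`) iff the number of `true`s before it equals the number of `false`s after it. -/
def AnchorAt (δ : List Bool) (i : ℕ) : Prop :=
  (δ.take i).count true = (δ.drop i).count false

/-- The graph of the map `φ_r`: `IsPhi r Λ l` says that `l = φ_r (Λ 0, …, Λ (r-1))`,
i.e. the boundary sequences of the `Λ j` can be padded with leading `false`s and
trailing `true`s to a common length `t` and a common anchor position `i₀`, and the
interlaced sequence is a padding of the boundary sequence of `l`. -/
def IsPhi (r : ℕ) (Λ : ℕ → List ℕ) (l : List ℕ) : Prop :=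
  ∃ (t i₀ : ℕ) (s : ℕ → List Bool) (p q : ℕ → ℕ),
    (∀ j < r,
      s j = List.replicate (p j) false ++ bseq (Λ j) ++ List.replicate (q j) true ∧
      (s j).length = t ∧ AnchorAt (s j) i₀) ∧
    ∃ P Q : ℕ,
      List.replicate P false ++ bseq l ++ List.replicate Q true =
        (List.range (r * t)).map (fun v => (s (v % r)).getD (v / r) false)

/-- The height of a ribbon: one less than its number of rows. -/
noncomputable def htOf (S : Set (ℕ × ℕ)) : ℕ := (Prod.fst '' S).ncard - 1

lemma invOn_cons {α : Type*} [LinearOrder α] (a : α) (s : List α) :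
    invOn (a :: s) = s.countP (fun b => decide (b < a)) + invOn s := by
  simp [invOn, List.countP_eq_length_filter]

lemma shift_inj {r a b : ℕ} (ha : a < r) (hb : b < r)
    (h : (a + 1) % r = (b + 1) % r) : a = b := by
  rcases Nat.lt_or_ge (a + 1) r with h1 | h1 <;> rcases Nat.lt_or_ge (b + 1) r with h2 | h2
  · rw [Nat.mod_eq_of_lt h1, Nat.mod_eq_of_lt h2] at h; omega
  · have hb1 : b + 1 = r := by omega
    rw [Nat.mod_eq_of_lt h1, hb1, Nat.mod_self] at h; omega
  · have ha1 : a + 1 = r := by omega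
    rw [Nat.mod_eq_of_lt h2, ha1, Nat.mod_self] at h; omega
  · omega

/-- The parity functional. -/
noncomputable def Gv (r : ℕ) (w : List ℕ) : ZMod 2 :=
  (invOn w : ZMod 2) - (invOn (w.map (fun a => (a + 1) % r) ++ [0]) : ZMod 2)

lemma Gv_cons (r a : ℕ) (s : List ℕ) :
    Gv r (a :: s) = Gv r s
      + (s.countP (fun b => decide (b < a)) : ZMod 2)
      - ((s.map (fun x => (x + 1) % r)).countP
          (fun b => decide (b < (a + 1) % r)) : ZMod 2)
      - (if 0 < (a + 1) % r then 1 else 0) := by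
  have h1 : (a :: s).map (fun x => (x + 1) % r) ++ [0]
      = (a + 1) % r :: (s.map (fun x => (x + 1) % r) ++ [0]) := by simp
  rw [Gv, Gv, h1, invOn_cons, invOn_cons, List.countP_append]
  have h2 : (List.countP (fun b => decide (b < (a + 1) % r)) [0])
      = if 0 < (a + 1) % r then 1 else 0 := by
    by_cases h : 0 < (a + 1) % r <;> simp [List.countP_cons, h]
  rw [h2]
  push_cast
  split <;> ring

lemma Gv_perm (r : ℕ) {w v : List ℕ} (h : w.Perm v) (hb : ∀ x ∈ w, x < r) :
    Gv r w = Gv r v := by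
  induction h with
  | nil => rfl
  | cons a h ih =>
    have hb' : ∀ x ∈ _, x < r := fun x hx => hb x (List.mem_cons_of_mem a hx)
    rw [Gv_cons, Gv_cons, ih hb', h.countP_eq, (h.map _).countP_eq]
  | swap x y l =>
    rw [Gv_cons, Gv_cons, Gv_cons, Gv_cons]
    simp only [List.countP_cons, List.map_cons]
    have hx : x < r := hb x (by simp)
    have hy : y < r := hb y (by simp)
    have h2 : (2 : ZMod 2) = 0 := by decide
    rcases lt_trichotomy x y with hxy | hxy | hxy
    · have hf : ¬ ((y + 1) % r = (x + 1) % r) := fun hh => by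
        have := shift_inj hy hx hh; omega
      have : (x + 1) % r < (y + 1) % r ∨ (y + 1) % r < (x + 1) % r := by omega
      push_cast
      rcases this with hf2 | hf2 <;>
        simp [hxy, Nat.not_lt.mpr hxy.le, hf2, Nat.not_lt.mpr hf2.le] <;>
        first
          | ring1
          | linear_combination h2
          | linear_combination -h2
    · subst hxy; ring
    · have hf : ¬ ((y + 1) % r = (x + 1) % r) := fun hh => by
        have := shift_inj hy hx hh; omega
      have : (x + 1) % r < (y + 1) % r ∨ (y + 1) % r < (x + 1) % r := by omega
      push_cast
      rcases this with hf2 | hf2 <;>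
        simp [hxy, Nat.not_lt.mpr hxy.le, hf2, Nat.not_lt.mpr hf2.le] <;>
        first
          | ring1
          | linear_combination h2
          | linear_combination -h2
  | trans h1 h2 ih1 ih2 =>
    exact (ih1 hb).trans (ih2 fun x hx => hb x (h1.mem_iff.mpr hx))

theorem inv_parity_stable_under_shift_append
    (r k : ℕ) (hr : 1 ≤ r) (w : List ℕ)
    (hperm : w.Perm ((List.range k).map (fun i => (k - 1 - i) % r))) :
    ((invOn w : ℤ) - (invOn ((List.range k).map (fun i => (k - 1 - i) % r)) : ℤ)) ≡
      ((invOn (w.map (fun a => (a + 1) % r) ++ [0]) : ℤ) -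
        (invOn ((((List.range k).map (fun i => (k - 1 - i) % r)).map
          (fun a => (a + 1) % r)) ++ [0]) : ℤ)) [ZMOD 2] := by
  have hb : ∀ x ∈ w, x < r := by
    intro x hx
    obtain ⟨i, -, rfl⟩ := List.mem_map.mp (hperm.mem_iff.mp hx)
    exact Nat.mod_lt _ hr
  have hG := Gv_perm r hperm hb
  rw [Gv, Gv] at hG
  have : ((2 : ℕ) : ℤ) = 2 := by norm_num
  rw [← this, ← ZMod.intCast_eq_intCast_iff]
  push_cast
  linear_combination hG
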